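/- Let r ≥ 7 be a prime and ζ ∈ ℂ a primitive r-th root of unity. Define τ_P = Σ_{n=0}^{r−2} ζ^n · (1 + ζ + ⋯ + ζ^n) · Π_{j=n+2}^{2n+1} (1 − ζ^j), an element of ℤ[ζ]. Then for every integer v there is no y ∈ ℤ[ζ] with τ_P − ζ^v·conj(τ_P) = r·y, where conj denotes complex conjugation. -/

import Mathlib

section PoincareAux

open Polynomial Finset

noncomputable def tauP (m : ℕ) : Polynomial ℤ :=
  ∑ n ∈ range m, X ^ n * (∑ k ∈ range (n + 1), X ^ k) *
    ∏ j ∈ Icc (n + 2) (2 * n + 1), (1 - X ^ j)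

lemma aeval_tauP {A : Type*} [CommRing A] (z : A) (m : ℕ) :
    aeval z (tauP m) =
      ∑ n ∈ range m, z ^ n * (∑ k ∈ range (n + 1), z ^ k) *
        ∏ j ∈ Icc (n + 2) (2 * n + 1), (1 - z ^ j) := by
  simp [tauP, map_sum, map_prod]

def gCof {A : Type*} [CommRing A] (t : A) : A :=
  -8896 - 57456*t - 228823*t^2 - 657029*t^3 - 1459524*t^4 - 2607527*t^5 - 3835506*t^6
  - 4713828*t^7 - 4884270*t^8 - 4287808*t^9 - 3194317*t^10 - 2016660*t^11 - 1074261*t^12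
  - 479160*t^13 - 176869*t^14 - 53108*t^15 - 12649*t^16 - 2300*t^17 - 300*t^18 - 25*t^19
  - t^20

lemma head_eq {A : Type*} [CommRing A] (z : A) :
    aeval z (tauP 4) =
      1 - 6*(z-1) + 45*(z-1)^2 - 464*(z-1)^3 + (z-1)^4 * gCof (z-1) := by
  rw [aeval_tauP]
  rw [show (range 4 : Finset ℕ) = {0, 1, 2, 3} from rfl]
  rw [sum_insert (by decide), sum_insert (by decide), sum_insert (by decide), sum_singleton]
  norm_num
  rw [show (Icc 4 5 : Finset ℕ) = {4, 5} from rfl,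
    show (Icc 5 7 : Finset ℕ) = {5, 6, 7} from rfl,
    show (range 3 : Finset ℕ) = {0,1,2} from rfl, show (range 4 : Finset ℕ) = {0,1,2,3} from rfl]
  rw [show ({4,5} : Finset ℕ) = insert 4 {5} from rfl, prod_insert (by decide), prod_singleton]
  rw [show ({5,6,7} : Finset ℕ) = insert 5 (insert 6 {7}) from rfl, prod_insert (by decide),
    prod_insert (by decide), prod_singleton]
  rw [sum_insert (by decide), sum_insert (by decide), sum_singleton,
    sum_insert (by decide), sum_insert (by decide), sum_insert (by decide), sum_singleton]
  unfold gCof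
  ring

lemma cubic_eq {A : Type*} [CommRing A] (x : A) :
    1 - 6*((1 - x + x^2 - x^3)-1) + 45*((1 - x + x^2 - x^3)-1)^2
      - 464*((1 - x + x^2 - x^3)-1)^3
    = 1 + 6*x + 39*x^2 + 380*x^3
      + x^4 * (-1257 + 2694*x - 3203*x^2 + 2784*x^3 - 1392*x^4 + 464*x^5) := by
  ring

lemma tail_dvd {A : Type*} [CommRing A] {x z : A} (hx : x ∣ z - 1) {m : ℕ} (hm : 4 ≤ m) :
    x ^ 4 ∣ aeval z (tauP m) - aeval z (tauP 4) := by
  rw [aeval_tauP, aeval_tauP, ← Finset.sum_Ico_eq_sub _ hm]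
  refine Finset.dvd_sum ?_
  intro n hn
  rw [Finset.mem_Ico] at hn
  refine Dvd.dvd.mul_left ?_ _
  have h1 : x ^ n ∣ ∏ j ∈ Icc (n+2) (2*n+1), (1 - z^j) := by
    have hcard : x ^ n = ∏ j ∈ Icc (n+2) (2*n+1), x := by
      rw [Finset.prod_const, Nat.card_Icc]; congr 1; omega
    rw [hcard]
    refine Finset.prod_dvd_prod_of_dvd _ _ ?_
    intro j _
    have h2 : z - 1 ∣ z ^ j - 1 := by simpa using sub_dvd_pow_sub_pow z 1 j
    have h3 : x ∣ z ^ j - 1 := hx.trans h2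
    have h4 : (1 : A) - z ^ j = -(z ^ j - 1) := by ring
    rw [h4]
    exact h3.neg_right
  exact (pow_dvd_pow x hn.1).trans h1

end PoincareAux

open Polynomial Finset in
/-- The Poincaré sphere criterion: for a prime `r ≥ 7` and a primitive `r`-th
root of unity `ζ`, the quantum invariant `τ_P` of the Poincaré sphere never
satisfies the congruence `τ_P ≡ ζ^v · conj(τ_P) (mod r)` in `ℤ[ζ]`. -/
theorem poincare_sphere_not_r_periodic
    (r : ℕ) (hr : r.Prime) (hr7 : 7 ≤ r) (ζ : ℂ) (hζ : IsPrimitiveRoot ζ r) :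
    ∀ v : ℤ, ¬ ∃ y ∈ Subring.closure ({ζ} : Set ℂ),
      (∑ n ∈ Finset.range (r - 1), ζ ^ n * (∑ k ∈ Finset.range (n + 1), ζ ^ k) *
          ∏ j ∈ Finset.Icc (n + 2) (2 * n + 1), (1 - ζ ^ j))
        - ζ ^ v * (starRingEnd ℂ)
            (∑ n ∈ Finset.range (r - 1), ζ ^ n * (∑ k ∈ Finset.range (n + 1), ζ ^ k) *
              ∏ j ∈ Finset.Icc (n + 2) (2 * n + 1), (1 - ζ ^ j))
        = (r : ℂ) * y := by
  rintro v ⟨y, hy, heq⟩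
  haveI : Fact r.Prime := ⟨hr⟩
  have hr0 : 0 < r := hr.pos
  have hζ0 : ζ ≠ 0 := hζ.ne_zero (by omega)
  have hζr : ζ ^ r = 1 := hζ.pow_eq_one
  have habs : ‖ζ‖ = 1 := Complex.norm_eq_one_of_pow_eq_one hζr (by omega)
  have hconj : (starRingEnd ℂ) ζ = ζ ^ (r - 1) := by
    rw [← Complex.inv_eq_conj habs]
    have h1 : ζ ^ (r - 1) * ζ = 1 := by
      rw [← pow_succ]
      rw [show r - 1 + 1 = r by omega]
      exact hζr
    exact (eq_inv_of_mul_eq_one_left h1).symm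
  set w : ℕ := (v % (r : ℤ)).toNat with hw
  have hzv : ζ ^ v = ζ ^ w := by
    have h0 : (0:ℤ) ≤ v % (r:ℤ) := Int.emod_nonneg v (by exact_mod_cast hr0.ne')
    have h1 : ζ ^ v = ζ ^ ((r:ℤ) * (v / (r:ℤ)) + v % (r:ℤ)) := by
      rw [Int.mul_ediv_add_emod]
    rw [h1, zpow_add₀ hζ0, zpow_mul]
    have h2 : ζ ^ (r:ℤ) = 1 := by rw [zpow_natCast]; exact hζr
    rw [h2, one_zpow, one_mul, ← Int.toNat_of_nonneg h0, zpow_natCast]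
  obtain ⟨Y, hY⟩ : ∃ p : Polynomial ℤ, aeval ζ p = y := by
    refine Subring.closure_induction (fun x hx => ?_) ⟨0, by simp⟩ ⟨1, by simp⟩
      (fun a b _ _ ⟨p, hp⟩ ⟨q, hq⟩ => ⟨p + q, by simp [hp, hq]⟩)
      (fun a _ ⟨p, hp⟩ => ⟨-p, by simp [hp]⟩)
      (fun a b _ _ ⟨p, hp⟩ ⟨q, hq⟩ => ⟨p * q, by simp [hp, hq]⟩) hy
    · rw [Set.mem_singleton_iff] at hx
      exact ⟨X, by simp [hx]⟩
  set Q : Polynomial ℤ := tauP (r-1) - X ^ w * (tauP (r-1)).comp (X ^ (r-1))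
      - C (r:ℤ) * Y with hQdef
  have hQ : aeval ζ Q = 0 := by
    have hτc : (starRingEnd ℂ)
        (∑ n ∈ Finset.range (r - 1), ζ ^ n * (∑ k ∈ Finset.range (n + 1), ζ ^ k) *
          ∏ j ∈ Finset.Icc (n + 2) (2 * n + 1), (1 - ζ ^ j))
        = aeval (ζ ^ (r-1)) (tauP (r-1)) := by
      rw [aeval_tauP]
      simp [map_sum, map_prod, hconj, ← pow_mul, mul_comm]
    have hcomp : aeval ζ ((tauP (r-1)).comp (X ^ (r-1))) = aeval (ζ ^ (r-1)) (tauP (r-1)) := by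
      rw [aeval_comp]; simp
    rw [hQdef]
    simp only [map_sub, map_mul, map_pow, aeval_X, aeval_C, hcomp, ← hτc]
    rw [aeval_tauP, hY]
    rw [hzv] at heq
    have hrc : (algebraMap ℤ ℂ) ((r:ℕ):ℤ) = (r:ℂ) := by push_cast; simp
    rw [hrc]
    linear_combination heq
  have hdvd : cyclotomic r ℤ ∣ Q := by
    rw [cyclotomic_eq_minpoly hζ hr0]
    exact minpoly.isIntegrallyClosed_dvd (hζ.isIntegral hr0) hQ
  -- map everything to (ZMod r)[X] via X ↦ X + 1
  have hcyc : aeval (X + 1 : (ZMod r)[X]) (cyclotomic r ℤ) = X ^ (r-1) := by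
    rw [cyclotomic_prime ℤ r]
    have h1 : aeval (X + 1 : (ZMod r)[X]) (∑ i ∈ range r, (X:Polynomial ℤ) ^ i)
        = ∑ i ∈ range r, (X + 1 : (ZMod r)[X]) ^ i := by
      simp [map_sum]
    have h2 : (∑ i ∈ range r, (X + 1 : (ZMod r)[X]) ^ i) * X = X ^ (r-1) * X := by
      have h3 := geom_sum_mul (X + 1 : (ZMod r)[X]) r
      rw [add_sub_cancel_right] at h3
      rw [h3, add_pow_char, one_pow]
      rw [show (X:(ZMod r)[X]) ^ r = X ^ (r-1) * X by
        rw [← pow_succ]; congr 1; omega]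
      ring
    rw [h1]
    exact mul_right_cancel₀ X_ne_zero h2
  have h4 : (X : (ZMod r)[X]) ^ 4 ∣ aeval (X + 1 : (ZMod r)[X]) Q := by
    have := map_dvd (aeval (X + 1 : (ZMod r)[X])) hdvd
    rw [hcyc] at this
    exact (pow_dvd_pow X (by omega)).trans this
  set u : (ZMod r)[X] := (X + 1) ^ (r - 1) with hu
  have hσQ : aeval (X + 1 : (ZMod r)[X]) Q
      = aeval (X + 1 : (ZMod r)[X]) (tauP (r-1)) - (X + 1) ^ w * aeval u (tauP (r-1)) := by
    rw [hQdef]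
    simp only [map_sub, map_mul, map_pow, aeval_X, aeval_C, aeval_comp]
    have : (algebraMap ℤ ((ZMod r)[X])) ((r:ℕ):ℤ) = 0 := by
      push_cast
      simp [ZMod.natCast_self]
    rw [this, zero_mul, sub_zero]
  -- tails
  have hu1 : (X : (ZMod r)[X]) ∣ u - 1 := by
    have := sub_dvd_pow_sub_pow (X + 1 : (ZMod r)[X]) 1 (r - 1)
    simpa using this
  have hx1 : (X : (ZMod r)[X]) ∣ (X + 1) - 1 := by simp
  have t1 : (X : (ZMod r)[X]) ^ 4 ∣
      aeval (X + 1 : (ZMod r)[X]) (tauP (r-1)) - aeval (X + 1 : (ZMod r)[X]) (tauP 4) :=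
    tail_dvd hx1 (by omega)
  have t2 : (X : (ZMod r)[X]) ^ 4 ∣ aeval u (tauP (r-1)) - aeval u (tauP 4) :=
    tail_dvd hu1 (by omega)
  -- replace u by its cubic truncation u₀
  set u₀ : (ZMod r)[X] := 1 - X + X^2 - X^3 with hu₀
  have huu0 : (X : (ZMod r)[X]) ^ 4 ∣ u - u₀ := by
    have h1 : (X + 1 : (ZMod r)[X]) ^ r = X ^ r + 1 := by
      have := add_pow_char (X : (ZMod r)[X]) 1 r
      simpa using this
    have h2 : (X + 1 : (ZMod r)[X]) * (u - u₀) = X ^ 4 * (X ^ (r - 4) + 1) := by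
      have h3 : (X + 1 : (ZMod r)[X]) * u = (X + 1) ^ r := by
        rw [hu, ← pow_succ']; congr 1; omega
      have h5 : (X : (ZMod r)[X]) ^ 4 * X ^ (r - 4) = X ^ r := by
        rw [← pow_add]; congr 1; omega
      rw [mul_sub, h3, h1, hu₀]
      rw [show ((X:(ZMod r)[X]) + 1) * (1 - X + X^2 - X^3) = 1 - X^4 by ring]
      rw [mul_add, h5]
      ring
    have hcop : IsCoprime ((X : (ZMod r)[X]) ^ 4) (X + 1) := by
      apply IsCoprime.pow_left
      exact ⟨-1, 1, by ring⟩
    apply hcop.dvd_of_dvd_mul_right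
    rw [mul_comm] at h2
    exact Dvd.intro _ h2.symm
  have hqu : (X : (ZMod r)[X]) ^ 4 ∣ aeval u (tauP 4) - aeval u₀ (tauP 4) := by
    refine huu0.trans ?_
    rw [aeval_def, aeval_def, eval₂_eq_eval_map, eval₂_eq_eval_map]
    exact sub_dvd_eval_sub u u₀ _
  -- explicit heads
  set A : (ZMod r)[X] := 1 - 6*X + 45*X^2 - 464*X^3 with hA
  set B : (ZMod r)[X] := 1 + 6*X + 39*X^2 + 380*X^3 with hB
  have hA4 : (X : (ZMod r)[X]) ^ 4 ∣ aeval (X + 1 : (ZMod r)[X]) (tauP 4) - A := by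
    rw [show aeval (X + 1 : (ZMod r)[X]) (tauP 4) = _ from head_eq (X + 1 : (ZMod r)[X]), hA]
    rw [show (X + 1 : (ZMod r)[X]) - 1 = X by ring]
    exact ⟨gCof X, by ring⟩
  have hB4 : (X : (ZMod r)[X]) ^ 4 ∣ aeval u₀ (tauP 4) - B := by
    rw [show aeval u₀ (tauP 4) = _ from head_eq u₀, hu₀, hB]
    refine ⟨((-1257 : (ZMod r)[X]) + 2694*X - 3203*X^2 + 2784*X^3 - 1392*X^4 + 464*X^5)
      + (-1 + X - X^2)^4 * gCof ((1 - X + X^2 - X^3 : (ZMod r)[X]) - 1), ?_⟩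
    linear_combination cubic_eq (X : (ZMod r)[X])
  -- combine
  have hF : (X : (ZMod r)[X]) ^ 4 ∣ A - (X + 1) ^ w * B := by
    have h5 : (X : (ZMod r)[X]) ^ 4 ∣ aeval (X + 1 : (ZMod r)[X]) (tauP (r-1)) - A := by
      have := dvd_add t1 hA4
      simpa using this
    have h6 : (X : (ZMod r)[X]) ^ 4 ∣ aeval u (tauP (r-1)) - B := by
      have := dvd_add (dvd_add t2 hqu) hB4
      simpa using this
    have h7 : A - (X + 1) ^ w * B
        = aeval (X + 1 : (ZMod r)[X]) Q
          - (aeval (X + 1 : (ZMod r)[X]) (tauP (r-1)) - A)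
          + (X + 1) ^ w * (aeval u (tauP (r-1)) - B) := by
      rw [hσQ]; ring
    rw [h7]
    exact dvd_add (dvd_sub h4 h5) (Dvd.dvd.mul_left h6 _)
  have hprod : (X + 1 : (ZMod r)[X]) ^ w * B
      = (X+1)^w * X^0 + C (6 : ZMod r) * ((X+1)^w * X^1)
        + C (39 : ZMod r) * ((X+1)^w * X^2) + C (380 : ZMod r) * ((X+1)^w * X^3) := by
    rw [hB]
    simp only [map_ofNat]
    ring
  have hAco : A = C (1 : ZMod r) * X^0 + C (-6 : ZMod r) * X^1
      + C (45 : ZMod r) * X^2 + C (-464 : ZMod r) * X^3 := by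
    rw [hA]
    simp only [map_neg, map_ofNat, map_one]
    ring
  rw [X_pow_dvd_iff] at hF
  have e1 := hF 1 (by norm_num)
  have e2 := hF 2 (by norm_num)
  have e3 := hF 3 (by norm_num)
  rw [coeff_sub, hprod, hAco] at e1 e2 e3
  simp only [coeff_add, coeff_C_mul, coeff_mul_X_pow', coeff_X_pow, coeff_X_add_one_pow,
    pow_zero, mul_one, pow_one, coeff_one, Nat.choose_zero_right, Nat.choose_one_right,
    Nat.cast_one] at e1 e2 e3
  norm_num at e1 e2 e3
  simp only [coeff_X_add_one_pow, coeff_one, coeff_X, Nat.choose_zero_right,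
    Nat.choose_one_right, Nat.cast_one] at e1 e2 e3
  norm_num at e1 e2 e3
  have hc : (w : ZMod r) = -12 := by linear_combination -e1
  have hch2 : ((w.choose 2 : ℕ) : ZMod r) = 78 := by linear_combination -e2 - 6*hc
  have hch3 : ((w.choose 3 : ℕ) : ZMod r) = -844 := by
    linear_combination -e3 - 6*hch2 - 39*hc
  have hdesc : ((w.descFactorial 3 : ℕ) : ZMod r) = -5064 := by
    rw [Nat.descFactorial_eq_factorial_mul_choose]
    push_cast
    rw [hch3]
    norm_num [Nat.factorial]
  have hcases : w = 0 ∨ w = 1 ∨ 2 ≤ w := by omega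
  rcases hcases with h0 | h1 | h2
  · rw [h0] at hc
    push_cast at hc
    have h12 : ((12 : ℕ) : ZMod r) = 0 := by push_cast; linear_combination hc
    have hdvd12 : r ∣ 12 := (ZMod.natCast_eq_zero_iff _ _).mp h12
    rw [show (12 : ℕ) = 2^2 * 3 by norm_num] at hdvd12
    rcases (Nat.Prime.dvd_mul hr).mp hdvd12 with h | h
    · have h2 := hr.dvd_of_dvd_pow h
      have := Nat.le_of_dvd (by norm_num) h2
      omega
    · have := Nat.le_of_dvd (by norm_num) h
      omega
  · rw [h1] at hc hch3
    push_cast at hc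
    have h13 : ((13 : ℕ) : ZMod r) = 0 := by push_cast; linear_combination hc
    rw [show Nat.choose 1 3 = 0 from rfl] at hch3
    have h844 : ((844 : ℕ) : ZMod r) = 0 := by
      push_cast
      linear_combination hch3
    have hd13 : r ∣ 13 := (ZMod.natCast_eq_zero_iff _ _).mp h13
    have hd844 : r ∣ 844 := (ZMod.natCast_eq_zero_iff _ _).mp h844
    have hgcd := Nat.dvd_gcd hd13 hd844
    have : Nat.gcd 13 844 = 1 := by decide
    rw [this] at hgcd
    have := Nat.dvd_one.mp hgcd
    omega
  · have hdf : w.descFactorial 3 = (w - 2) * ((w - 1) * w) := by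
      simp [Nat.descFactorial]
    have hprod3 : ((w : ZMod r) - 2) * (((w : ZMod r) - 1) * (w : ZMod r)) = -5064 := by
      rw [← hdesc, hdf]
      push_cast [Nat.cast_sub (show 1 ≤ w by omega), Nat.cast_sub (show 2 ≤ w by omega)]
      ring
    have h2880 : ((2880 : ℕ) : ZMod r) = 0 := by
      push_cast
      linear_combination hprod3 - ((w : ZMod r)^2 - 15*(w : ZMod r) + 182) * hc
    have hdvd2880 : r ∣ 2880 := (ZMod.natCast_eq_zero_iff _ _).mp h2880
    rw [show (2880 : ℕ) = 2^6 * (3^2 * 5) by norm_num] at hdvd2880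
    rcases (Nat.Prime.dvd_mul hr).mp hdvd2880 with h | h
    · have h2 := hr.dvd_of_dvd_pow h
      have := Nat.le_of_dvd (by norm_num) h2
      omega
    · rcases (Nat.Prime.dvd_mul hr).mp h with h' | h'
      · have h3 := hr.dvd_of_dvd_pow h'
        have := Nat.le_of_dvd (by norm_num) h3
        omega
      · have := Nat.le_of_dvd (by norm_num) h'
        omega
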